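/- The pair (A, R) is a quasi-triangular Hopf algebra. Explicitly: (1) R is an invertible element of A ⊗ A; (2) for every a ∈ A one has (P ∘ Δ)(a) = R·Δ(a)·R⁻¹, where P : A ⊗ A → A ⊗ A is the flip x ⊗ y ↦ y ⊗ x; (3) (id ⊗ Δ)(R) = R₁₃·R₁₂; and (4) (Δ ⊗ id)(R) = R₁₃·R₂₃; where in A ⊗ A ⊗ A one sets R₁₂ = R ⊗ 1, R₂₃ = 1 ⊗ R, and R₁₃ = (1/(2N)) Σ_{j,k ∈ ℤ_{2N}} t^{−jk} K^j ⊗ 1 ⊗ K^k. -/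

import Mathlib

open Finset TensorProduct

noncomputable section

/-- The quantum group `U_t(u(1)) = ℂ[ℤ_{2N}]`, the complex group algebra of the cyclic group
`ℤ_{2N}`. -/
abbrev QG (N : ℕ) := MonoidAlgebra ℂ (Multiplicative (ZMod (2 * N)))

/-- The basis element `K^j`, `j ∈ ℤ_{2N}` (`K` is the image of the fixed generator `1`). -/
def KK (N : ℕ) (j : ZMod (2 * N)) : QG N :=
  MonoidAlgebra.single (Multiplicative.ofAdd j) 1

/-- `t = exp(πi/N)`, a primitive `2N`-th root of unity. -/
def tq (N : ℕ) : ℂ := Complex.exp ((Real.pi : ℂ) * Complex.I / N)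

/-- The universal `R`-matrix `R = (1/2N) Σ_{j,k ∈ ℤ_{2N}} t^{−jk} K^j ⊗ K^k`. -/
def Rmat (N : ℕ) : QG N ⊗[ℂ] QG N :=
  (2 * (N : ℂ))⁻¹ • ∑ j ∈ Finset.range (2 * N), ∑ k ∈ Finset.range (2 * N),
    tq N ^ (-((j : ℤ) * (k : ℤ))) • (KK N (j : ZMod (2 * N)) ⊗ₜ[ℂ] KK N (k : ZMod (2 * N)))

/-- The comultiplication `Δ : A → A ⊗ A`, `Δ(K^j) = K^j ⊗ K^j`. -/
def DeltaQG (N : ℕ) : QG N →ₐ[ℂ] QG N ⊗[ℂ] QG N :=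
  (MonoidAlgebra.lift ℂ (QG N ⊗[ℂ] QG N) (Multiplicative (ZMod (2 * N))))
    { toFun := fun x => MonoidAlgebra.single x 1 ⊗ₜ[ℂ] MonoidAlgebra.single x 1
      map_one' := by
        simp [MonoidAlgebra.one_def, Algebra.TensorProduct.one_def]
      map_mul' := fun x y => by
        simp only [Algebra.TensorProduct.tmul_mul_tmul, MonoidAlgebra.single_mul_single,
          one_mul] }

/-- The antipode `S : A → A`, `S(K^j) = K^{−j}`. -/
def SQG (N : ℕ) : QG N →ₐ[ℂ] QG N :=
  (MonoidAlgebra.lift ℂ (QG N) (Multiplicative (ZMod (2 * N))))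
    { toFun := fun x => MonoidAlgebra.single x⁻¹ 1
      map_one' := by simp [MonoidAlgebra.one_def]
      map_mul' := fun x y => by
        simp only [mul_inv, MonoidAlgebra.single_mul_single, one_mul] }

/-- `R₁₂ = Σ c_{jk} K^j ⊗ K^k ⊗ 1` in `A ⊗ (A ⊗ A)`. -/
def R12r (N : ℕ) : QG N ⊗[ℂ] (QG N ⊗[ℂ] QG N) :=
  (2 * (N : ℂ))⁻¹ • ∑ j ∈ Finset.range (2 * N), ∑ k ∈ Finset.range (2 * N),
    tq N ^ (-((j : ℤ) * (k : ℤ))) •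
      (KK N (j : ZMod (2 * N)) ⊗ₜ[ℂ] (KK N (k : ZMod (2 * N)) ⊗ₜ[ℂ] (1 : QG N)))

/-- `R₁₃ = (1/2N) Σ_{j,k} t^{−jk} K^j ⊗ 1 ⊗ K^k` in `A ⊗ (A ⊗ A)`. -/
def R13r (N : ℕ) : QG N ⊗[ℂ] (QG N ⊗[ℂ] QG N) :=
  (2 * (N : ℂ))⁻¹ • ∑ j ∈ Finset.range (2 * N), ∑ k ∈ Finset.range (2 * N),
    tq N ^ (-((j : ℤ) * (k : ℤ))) •
      (KK N (j : ZMod (2 * N)) ⊗ₜ[ℂ] ((1 : QG N) ⊗ₜ[ℂ] KK N (k : ZMod (2 * N))))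

/-- `R₁₃ = (1/2N) Σ_{j,k} t^{−jk} K^j ⊗ 1 ⊗ K^k` in `(A ⊗ A) ⊗ A`. -/
def R13l (N : ℕ) : (QG N ⊗[ℂ] QG N) ⊗[ℂ] QG N :=
  (2 * (N : ℂ))⁻¹ • ∑ j ∈ Finset.range (2 * N), ∑ k ∈ Finset.range (2 * N),
    tq N ^ (-((j : ℤ) * (k : ℤ))) •
      ((KK N (j : ZMod (2 * N)) ⊗ₜ[ℂ] (1 : QG N)) ⊗ₜ[ℂ] KK N (k : ZMod (2 * N)))

/-- `R₂₃ = 1 ⊗ Σ c_{jk} K^j ⊗ K^k` in `(A ⊗ A) ⊗ A`. -/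
def R23l (N : ℕ) : (QG N ⊗[ℂ] QG N) ⊗[ℂ] QG N :=
  (2 * (N : ℂ))⁻¹ • ∑ j ∈ Finset.range (2 * N), ∑ k ∈ Finset.range (2 * N),
    tq N ^ (-((j : ℤ) * (k : ℤ))) •
      (((1 : QG N) ⊗ₜ[ℂ] KK N (j : ZMod (2 * N))) ⊗ₜ[ℂ] KK N (k : ZMod (2 * N)))


section Aux

variable (N : ℕ) [NeZero N]

lemma tq_prim : IsPrimitiveRoot (tq N) (2*N) := by
  have hpos : 0 < N := Nat.pos_of_ne_zero (NeZero.ne N)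
  have hNc : (N:ℂ) ≠ 0 := Nat.cast_ne_zero.mpr hpos.ne'
  have h : tq N = Complex.exp (2 * Real.pi * Complex.I / (2*N)) := by
    unfold tq
    congr 1
    field_simp
  rw [h]
  have := Complex.isPrimitiveRoot_exp (2*N) (by positivity)
  convert this using 2
  push_cast
  ring

lemma tq_ne_zero : tq N ≠ 0 := Complex.exp_ne_zero _

lemma tq_pow_2N : tq N ^ (2*N) = 1 := (tq_prim N).pow_eq_one

lemma KK_mul (a b : ZMod (2*N)) : KK N a * KK N b = KK N (a+b) := by
  simp [KK, MonoidAlgebra.single_mul_single, ← ofAdd_add]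

lemma KK_zero : KK N 0 = 1 := rfl

/-- the character `a ↦ t^a` on `ℤ_{2N}`. -/
def chi (a : ZMod (2*N)) : ℂ := tq N ^ a.val

lemma chi_natCast (m : ℕ) : chi N (m : ZMod (2*N)) = tq N ^ m := by
  rw [chi, ZMod.val_natCast, ← pow_eq_pow_mod m (tq_pow_2N N)]

lemma chi_add (a b : ZMod (2*N)) : chi N (a+b) = chi N a * chi N b := by
  rw [chi, chi, chi, ZMod.val_add, ← pow_eq_pow_mod _ (tq_pow_2N N), pow_add]

lemma chi_zero : chi N 0 = 1 := by
  simp [chi, ZMod.val_zero]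

lemma chi_intCast (m : ℤ) : chi N ((m : ZMod (2*N))) = tq N ^ m := by
  have h2N : (2*N : ℕ) ≠ 0 := by have := NeZero.ne N; omega
  obtain ⟨q, r, hr0, hm⟩ : ∃ q r : ℤ, 0 ≤ r ∧ m = (2*N:ℤ)*q + r :=
    ⟨m / (2*N:ℤ), m % (2*N:ℤ), Int.emod_nonneg _ (by exact_mod_cast h2N),
      by rw [Int.mul_ediv_add_emod]⟩
  subst hm
  lift r to ℕ using hr0 with r
  have h2 : tq N ^ (2*(N:ℤ)) = 1 := by
    rw [show (2*(N:ℤ)) = ((2*N:ℕ):ℤ) by push_cast; ring, zpow_natCast, tq_pow_2N]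
  have hz : tq N ^ ((2*N:ℤ)*q + (r:ℤ)) = tq N ^ r := by
    rw [zpow_add₀ (tq_ne_zero N), zpow_mul, h2, one_zpow, one_mul, zpow_natCast]
  rw [hz]
  have h0 : (2*(N:ZMod (2*N))) = 0 := by
    have := ZMod.natCast_self (2*N)
    push_cast at this
    exact this
  have hcast : (((2*N:ℤ)*q + (r:ℤ) : ℤ) : ZMod (2*N)) = ((r : ℕ) : ZMod (2*N)) := by
    push_cast
    rw [h0]
    ring
  rw [hcast, chi_natCast]

lemma chi_sum (a : ZMod (2*N)) :
    ∑ j : ZMod (2*N), chi N (j * a) = if a = 0 then (2*(N:ℂ)) else 0 := by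
  by_cases h : a = 0
  · subst h
    simp only [mul_zero, chi_zero, Finset.sum_const, Finset.card_univ, ZMod.card, if_true,
      nsmul_eq_mul, mul_one]
    push_cast; ring
  · rw [if_neg h]
    have hne1 : chi N a ≠ 1 := by
      have hvpos : 0 < a.val := by
        rcases Nat.eq_zero_or_pos a.val with h0 | h0
        · exact absurd ((ZMod.val_eq_zero a).mp h0) h
        · exact h0
      exact (tq_prim N).pow_ne_one_of_pos_of_lt hvpos.ne' (ZMod.val_lt a)
    have key : chi N a * ∑ j : ZMod (2*N), chi N (j * a) = ∑ j : ZMod (2*N), chi N (j * a) := by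
      rw [Finset.mul_sum]
      have h2 : ∀ j : ZMod (2*N), chi N a * chi N (j * a) = chi N ((j + 1) * a) := by
        intro j
        rw [← chi_add]
        congr 1
        ring
      simp only [h2]
      exact Equiv.sum_comp (Equiv.addRight 1) (fun j => chi N (j * a))
    by_contra hS
    have := sub_eq_zero.mpr key
    rw [← sub_one_mul] at this
    rcases mul_eq_zero.mp this with h1 | h1
    · exact hne1 (by linear_combination h1)
    · exact hS h1

/-- The orthogonal idempotents `e_k = (1/2N) Σ_j t^{-jk} K^j`. -/
def ee (k : ZMod (2*N)) : QG N :=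
  (2 * (N : ℂ))⁻¹ • ∑ j : ZMod (2*N), chi N (-(j*k)) • KK N j

lemma sum_range_zmod {M : Type*} [AddCommMonoid M] (n : ℕ) [NeZero n] (f : ZMod n → M) :
    ∑ j ∈ Finset.range n, f (j : ZMod n) = ∑ j : ZMod n, f j := by
  refine Finset.sum_nbij' (fun j => (j : ZMod n)) (fun a => a.val) ?_ ?_ ?_ ?_ ?_ <;>
    simp +contextual [ZMod.val_lt, ZMod.val_natCast, ZMod.natCast_zmod_val, Nat.mod_eq_of_lt]

/-- Key representation lemma: any of the `R`-matrix-type sums equals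
`Σ_k T (e_k) (K^k)` for the appropriate bilinear map `T`. -/
lemma key {M : Type*} [AddCommMonoid M] [Module ℂ M]
    (T : QG N →ₗ[ℂ] QG N →ₗ[ℂ] M) :
    (2 * (N : ℂ))⁻¹ • ∑ j ∈ Finset.range (2 * N), ∑ k ∈ Finset.range (2 * N),
        tq N ^ (-((j : ℤ) * (k : ℤ))) • T (KK N (j : ZMod (2 * N))) (KK N (k : ZMod (2 * N)))
      = ∑ k : ZMod (2*N), T (ee N k) (KK N k) := by
  have hco : ∀ j k : ℕ, tq N ^ (-((j:ℤ)*(k:ℤ)))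
      = chi N (-((j : ZMod (2*N))*(k : ZMod (2*N)))) := by
    intro j k
    rw [← chi_intCast N (-((j:ℤ)*(k:ℤ)))]
    congr 1
    push_cast
    ring
  simp only [hco]
  have h1 : ∀ j : ℕ, ∑ k ∈ Finset.range (2*N),
      chi N (-((j : ZMod (2*N))*(k : ZMod (2*N)))) • T (KK N (j : ZMod (2*N))) (KK N (k : ZMod (2*N)))
      = ∑ k : ZMod (2*N), chi N (-((j : ZMod (2*N))*k)) • T (KK N (j : ZMod (2*N))) (KK N k) :=
    fun j => sum_range_zmod (2*N)
      (fun k => chi N (-((j : ZMod (2*N))*k)) • T (KK N (j : ZMod (2*N))) (KK N k))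
  simp only [h1]
  rw [sum_range_zmod (2*N)
    (fun j => ∑ k : ZMod (2*N), chi N (-(j*k)) • T (KK N j) (KK N k))]
  rw [Finset.sum_comm, Finset.smul_sum]
  refine Finset.sum_congr rfl fun k _ => ?_
  simp only [ee, map_smul, map_sum, LinearMap.smul_apply, LinearMap.sum_apply, Finset.smul_sum]

lemma ee_mul (k l : ZMod (2*N)) : ee N k * ee N l = if k = l then ee N k else 0 := by
  rw [ee, ee, smul_mul_assoc, mul_smul_comm, smul_smul, Finset.sum_mul_sum]
  have step1 : ∀ j j' : ZMod (2*N),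
      (chi N (-(j*k)) • KK N j) * (chi N (-(j'*l)) • KK N j')
      = (chi N (j*(l-k)) * chi N (-((j+j')*l))) • KK N (j+j') := by
    intro j j'
    rw [smul_mul_assoc, mul_smul_comm, smul_smul, KK_mul,
      ← chi_add N (-(j*k)) (-(j'*l)), ← chi_add N (j*(l-k)) (-((j+j')*l))]
    congr 1
    ring
  simp only [step1]
  have step2 : ∀ j : ZMod (2*N),
      ∑ j' : ZMod (2*N), (chi N (j*(l-k)) * chi N (-((j+j')*l))) • KK N (j+j')
      = ∑ m : ZMod (2*N), (chi N (j*(l-k)) * chi N (-(m*l))) • KK N m :=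
    fun j => Equiv.sum_comp (Equiv.addLeft j)
      (fun m => (chi N (j*(l-k)) * chi N (-(m*l))) • KK N m)
  simp only [step2]
  rw [Finset.sum_comm]
  simp only [mul_smul, ← Finset.smul_sum]
  have step3 : ∀ m : ZMod (2*N),
      (∑ j : ZMod (2*N), chi N (j*(l-k)) • (chi N (-(m*l)) • KK N m))
      = (∑ j : ZMod (2*N), chi N (j*(l-k))) • (chi N (-(m*l)) • KK N m) := by
    intro m
    rw [Finset.sum_smul]
  simp only [step3, chi_sum N (l-k)]
  by_cases h : k = l
  · subst h
    rw [if_pos rfl, if_pos (sub_self k)]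
    simp only [ee, Finset.smul_sum]
    refine Finset.sum_congr rfl fun m _ => ?_
    simp only [smul_smul]
    congr 1
    have h2 : (2*(N:ℂ)) ≠ 0 := by
      have := NeZero.ne N
      simp [this]
    field_simp
  · rw [if_neg h, if_neg (sub_ne_zero.mpr (Ne.symm h))]
    simp

lemma sum_ee : ∑ k : ZMod (2*N), ee N k = 1 := by
  simp only [ee, ← Finset.smul_sum]
  rw [Finset.sum_comm]
  have h1 : ∀ j : ZMod (2*N), ∑ k : ZMod (2*N), chi N (-(j*k)) • KK N j
      = (∑ k : ZMod (2*N), chi N (k * (-j))) • KK N j := by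
    intro j
    rw [Finset.sum_smul]
    refine Finset.sum_congr rfl fun a _ => ?_
    congr 2
    ring
  simp only [h1, chi_sum, neg_eq_zero, ite_smul, zero_smul]
  rw [Finset.sum_ite_eq' Finset.univ (0 : ZMod (2*N)) (fun j => (2*(N:ℂ)) • KK N j)]
  have h2 : (2*(N:ℂ)) ≠ 0 := by
    have := NeZero.ne N
    simp [this]
  rw [if_pos (Finset.mem_univ _)]
  rw [smul_smul, inv_mul_cancel₀ h2, one_smul, KK_zero]

lemma Delta_KK (j : ZMod (2*N)) : DeltaQG N (KK N j) = KK N j ⊗ₜ[ℂ] KK N j := by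
  rw [DeltaQG, KK, MonoidAlgebra.lift_single, one_smul]
  rfl

lemma Delta_ee (k : ZMod (2*N)) :
    DeltaQG N (ee N k) = ∑ a : ZMod (2*N), ee N a ⊗ₜ[ℂ] ee N (k - a) := by
  have h2 : (2*(N:ℂ)) ≠ 0 := by
    have := NeZero.ne N
    simp [this]
  -- LHS
  rw [ee, map_smul, map_sum]
  simp only [map_smul, Delta_KK]
  -- RHS: expand each term
  have expand : ∀ a : ZMod (2*N), ee N a ⊗ₜ[ℂ] ee N (k - a)
      = ((2*(N:ℂ))⁻¹ * (2*(N:ℂ))⁻¹) • ∑ j : ZMod (2*N), ∑ j' : ZMod (2*N),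
          (chi N (a*(j'-j)) * chi N (-(j'*k))) • (KK N j ⊗ₜ[ℂ] KK N j') := by
    intro a
    rw [ee, ee, ← TensorProduct.smul_tmul', TensorProduct.tmul_smul, smul_smul,
      TensorProduct.sum_tmul]
    congr 1
    refine Finset.sum_congr rfl fun j _ => ?_
    rw [← TensorProduct.smul_tmul', TensorProduct.tmul_sum, Finset.smul_sum]
    refine Finset.sum_congr rfl fun j' _ => ?_
    rw [TensorProduct.tmul_smul, smul_smul]
    congr 1
    rw [← chi_add, ← chi_add]
    congr 1
    ring
  simp only [expand]
  rw [← Finset.smul_sum, Finset.sum_comm]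
  have swap2 : ∀ j : ZMod (2*N),
      ∑ a : ZMod (2*N), ∑ j' : ZMod (2*N),
        (chi N (a*(j'-j)) * chi N (-(j'*k))) • (KK N j ⊗ₜ[ℂ] KK N j')
      = ∑ j' : ZMod (2*N),
          (∑ a : ZMod (2*N), chi N (a*(j'-j))) • (chi N (-(j'*k)) • (KK N j ⊗ₜ[ℂ] KK N j')) := by
    intro j
    rw [Finset.sum_comm]
    refine Finset.sum_congr rfl fun j' _ => ?_
    rw [Finset.sum_smul]
    refine Finset.sum_congr rfl fun a _ => ?_
    rw [smul_smul]
  simp only [swap2, chi_sum]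
  have collapse : ∀ j : ZMod (2*N),
      ∑ j' : ZMod (2*N), (if j' - j = 0 then (2*(N:ℂ)) else 0) •
          (chi N (-(j'*k)) • (KK N j ⊗ₜ[ℂ] KK N j'))
      = (2*(N:ℂ)) • (chi N (-(j*k)) • (KK N j ⊗ₜ[ℂ] KK N j)) := by
    intro j
    have hiff : ∀ j' : ZMod (2*N), (j' - j = 0) = (j' = j) := by
      intro j'
      simp [sub_eq_zero]
    simp only [hiff, ite_smul, zero_smul]
    rw [Finset.sum_ite_eq' Finset.univ j
      (fun j' => (2*(N:ℂ)) • (chi N (-(j'*k)) • (KK N j ⊗ₜ[ℂ] KK N j')))]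
    rw [if_pos (Finset.mem_univ _)]
  simp only [collapse]
  rw [Finset.smul_sum, Finset.smul_sum]
  refine Finset.sum_congr rfl fun j _ => ?_
  rw [smul_smul, smul_smul, smul_smul]
  congr 1
  field_simp

lemma Delta_cocomm (a : QG N) :
    (Algebra.TensorProduct.comm ℂ (QG N) (QG N)) (DeltaQG N a) = DeltaQG N a := by
  have h : ((Algebra.TensorProduct.comm ℂ (QG N) (QG N)).toAlgHom.comp (DeltaQG N))
      = DeltaQG N := by
    apply MonoidAlgebra.algHom_ext
    intro x
    have h1 : (MonoidAlgebra.single x (1:ℂ) : QG N) = KK N (Multiplicative.toAdd x) := rfl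
    rw [AlgHom.comp_apply, h1, Delta_KK]
    simp [Algebra.TensorProduct.comm_tmul]
    exact Subsingleton.elim _ _
  exact AlgHom.congr_fun h a


/-- bilinear map `(a,b) ↦ a ⊗ (b ⊗ 1)`. -/
def T12 : QG N →ₗ[ℂ] QG N →ₗ[ℂ] (QG N ⊗[ℂ] (QG N ⊗[ℂ] QG N)) :=
  LinearMap.mk₂ ℂ (fun a b => a ⊗ₜ[ℂ] (b ⊗ₜ[ℂ] (1:QG N)))
    (fun m₁ m₂ n => by simp [TensorProduct.add_tmul, TensorProduct.tmul_add, ← TensorProduct.smul_tmul', TensorProduct.tmul_smul])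
    (fun c m n => by simp [TensorProduct.add_tmul, TensorProduct.tmul_add, ← TensorProduct.smul_tmul', TensorProduct.tmul_smul])
    (fun m n₁ n₂ => by simp [TensorProduct.add_tmul, TensorProduct.tmul_add, ← TensorProduct.smul_tmul', TensorProduct.tmul_smul])
    (fun c m n => by simp [TensorProduct.add_tmul, TensorProduct.tmul_add, ← TensorProduct.smul_tmul', TensorProduct.tmul_smul])

/-- bilinear map `(a,b) ↦ a ⊗ (1 ⊗ b)`. -/
def T13 : QG N →ₗ[ℂ] QG N →ₗ[ℂ] (QG N ⊗[ℂ] (QG N ⊗[ℂ] QG N)) :=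
  LinearMap.mk₂ ℂ (fun a b => a ⊗ₜ[ℂ] ((1:QG N) ⊗ₜ[ℂ] b))
    (fun m₁ m₂ n => by simp [TensorProduct.add_tmul, TensorProduct.tmul_add, ← TensorProduct.smul_tmul', TensorProduct.tmul_smul])
    (fun c m n => by simp [TensorProduct.add_tmul, TensorProduct.tmul_add, ← TensorProduct.smul_tmul', TensorProduct.tmul_smul])
    (fun m n₁ n₂ => by simp [TensorProduct.add_tmul, TensorProduct.tmul_add, ← TensorProduct.smul_tmul', TensorProduct.tmul_smul])
    (fun c m n => by simp [TensorProduct.add_tmul, TensorProduct.tmul_add, ← TensorProduct.smul_tmul', TensorProduct.tmul_smul])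

/-- bilinear map `(a,b) ↦ (a ⊗ 1) ⊗ b`. -/
def T13' : QG N →ₗ[ℂ] QG N →ₗ[ℂ] ((QG N ⊗[ℂ] QG N) ⊗[ℂ] QG N) :=
  LinearMap.mk₂ ℂ (fun a b => (a ⊗ₜ[ℂ] (1:QG N)) ⊗ₜ[ℂ] b)
    (fun m₁ m₂ n => by simp [TensorProduct.add_tmul, TensorProduct.tmul_add, ← TensorProduct.smul_tmul', TensorProduct.tmul_smul])
    (fun c m n => by simp [TensorProduct.add_tmul, TensorProduct.tmul_add, ← TensorProduct.smul_tmul', TensorProduct.tmul_smul])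
    (fun m n₁ n₂ => by simp [TensorProduct.add_tmul, TensorProduct.tmul_add, ← TensorProduct.smul_tmul', TensorProduct.tmul_smul])
    (fun c m n => by simp [TensorProduct.add_tmul, TensorProduct.tmul_add, ← TensorProduct.smul_tmul', TensorProduct.tmul_smul])

/-- bilinear map `(a,b) ↦ (1 ⊗ a) ⊗ b`. -/
def T23 : QG N →ₗ[ℂ] QG N →ₗ[ℂ] ((QG N ⊗[ℂ] QG N) ⊗[ℂ] QG N) :=
  LinearMap.mk₂ ℂ (fun a b => ((1:QG N) ⊗ₜ[ℂ] a) ⊗ₜ[ℂ] b)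
    (fun m₁ m₂ n => by simp [TensorProduct.add_tmul, TensorProduct.tmul_add, ← TensorProduct.smul_tmul', TensorProduct.tmul_smul])
    (fun c m n => by simp [TensorProduct.add_tmul, TensorProduct.tmul_add, ← TensorProduct.smul_tmul', TensorProduct.tmul_smul])
    (fun m n₁ n₂ => by simp [TensorProduct.add_tmul, TensorProduct.tmul_add, ← TensorProduct.smul_tmul', TensorProduct.tmul_smul])
    (fun c m n => by simp [TensorProduct.add_tmul, TensorProduct.tmul_add, ← TensorProduct.smul_tmul', TensorProduct.tmul_smul])

lemma Rmat_ee : Rmat N = ∑ k : ZMod (2*N), ee N k ⊗ₜ[ℂ] KK N k := by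
  have h := key N (TensorProduct.mk ℂ (QG N) (QG N))
  simp only [TensorProduct.mk_apply] at h
  unfold Rmat
  exact h

lemma R12r_ee : R12r N = ∑ k : ZMod (2*N), ee N k ⊗ₜ[ℂ] (KK N k ⊗ₜ[ℂ] (1:QG N)) := by
  have h := key N (T12 N)
  simp only [T12, LinearMap.mk₂_apply] at h
  unfold R12r
  exact h

lemma R13r_ee : R13r N = ∑ k : ZMod (2*N), ee N k ⊗ₜ[ℂ] ((1:QG N) ⊗ₜ[ℂ] KK N k) := by
  have h := key N (T13 N)
  simp only [T13, LinearMap.mk₂_apply] at h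
  unfold R13r
  exact h

lemma R13l_ee : R13l N = ∑ k : ZMod (2*N), (ee N k ⊗ₜ[ℂ] (1:QG N)) ⊗ₜ[ℂ] KK N k := by
  have h := key N (T13' N)
  simp only [T13', LinearMap.mk₂_apply] at h
  unfold R13l
  exact h

lemma R23l_ee : R23l N = ∑ k : ZMod (2*N), ((1:QG N) ⊗ₜ[ℂ] ee N k) ⊗ₜ[ℂ] KK N k := by
  have h := key N (T23 N)
  simp only [T23, LinearMap.mk₂_apply] at h
  unfold R23l
  exact h

/-- the inverse of the R-matrix. -/
def Rinv' : QG N ⊗[ℂ] QG N := ∑ k : ZMod (2*N), ee N k ⊗ₜ[ℂ] KK N (-k)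

lemma Rmat_mul_Rinv : Rmat N * Rinv' N = 1 := by
  classical
  rw [Rmat_ee, Rinv', Finset.sum_mul_sum]
  simp only [Algebra.TensorProduct.tmul_mul_tmul, ee_mul, KK_mul, TensorProduct.ite_tmul,
    Finset.sum_ite_eq, Finset.mem_univ, if_true, add_neg_cancel, KK_zero]
  rw [← TensorProduct.sum_tmul, sum_ee]
  rw [Algebra.TensorProduct.one_def]

lemma hex1 : (Algebra.TensorProduct.map (AlgHom.id ℂ (QG N)) (DeltaQG N)) (Rmat N)
    = R13r N * R12r N := by
  classical
  rw [Rmat_ee, map_sum]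
  simp only [Algebra.TensorProduct.map_tmul, AlgHom.coe_id, id_eq, Delta_KK]
  rw [R13r_ee, R12r_ee,
    Finset.sum_mul_sum (R := QG N ⊗[ℂ] (QG N ⊗[ℂ] QG N)) Finset.univ Finset.univ
      (fun k => ee N k ⊗ₜ[ℂ] ((1:QG N) ⊗ₜ[ℂ] KK N k))
      (fun k => ee N k ⊗ₜ[ℂ] (KK N k ⊗ₜ[ℂ] (1:QG N)))]
  simp only [Algebra.TensorProduct.tmul_mul_tmul, ee_mul, one_mul, mul_one,
    TensorProduct.ite_tmul, Finset.sum_ite_eq, Finset.mem_univ, if_true]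

lemma hex2 : (Algebra.TensorProduct.map (DeltaQG N) (AlgHom.id ℂ (QG N))) (Rmat N)
    = R13l N * R23l N := by
  classical
  rw [Rmat_ee, map_sum]
  simp only [Algebra.TensorProduct.map_tmul, AlgHom.coe_id, id_eq, Delta_ee,
    TensorProduct.sum_tmul]
  rw [R13l_ee, R23l_ee,
    Finset.sum_mul_sum (R := (QG N ⊗[ℂ] QG N) ⊗[ℂ] QG N) Finset.univ Finset.univ
      (fun k => (ee N k ⊗ₜ[ℂ] (1:QG N)) ⊗ₜ[ℂ] KK N k)
      (fun k => ((1:QG N) ⊗ₜ[ℂ] ee N k) ⊗ₜ[ℂ] KK N k)]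
  simp only [Algebra.TensorProduct.tmul_mul_tmul, one_mul, mul_one, KK_mul]
  rw [Finset.sum_comm]
  refine Finset.sum_congr rfl fun k _ => ?_
  rw [← Equiv.sum_comp (Equiv.addLeft k)
    (fun m => (ee N k ⊗ₜ[ℂ] ee N (m - k)) ⊗ₜ[ℂ] KK N m)]
  refine Finset.sum_congr rfl fun l _ => ?_
  simp [add_sub_cancel_left]

end Aux

/-- **`(A, R)` is a quasi-triangular Hopf algebra**: `R` is invertible, conjugation by `R`
turns `Δ` into `Δ_op = P ∘ Δ`, and the two hexagon identities
`(id ⊗ Δ)(R) = R₁₃·R₁₂` and `(Δ ⊗ id)(R) = R₁₃·R₂₃` hold. -/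
theorem stmt_0 (N : ℕ) (hpos : 0 < N) (hN : Even N) :
    ∃ Rinv : QG N ⊗[ℂ] QG N,
      Rmat N * Rinv = 1 ∧ Rinv * Rmat N = 1 ∧
      (∀ a : QG N,
        (Algebra.TensorProduct.comm ℂ (QG N) (QG N)) (DeltaQG N a)
          = Rmat N * DeltaQG N a * Rinv) ∧
      (Algebra.TensorProduct.map (AlgHom.id ℂ (QG N)) (DeltaQG N)) (Rmat N)
        = R13r N * R12r N ∧
      (Algebra.TensorProduct.map (DeltaQG N) (AlgHom.id ℂ (QG N))) (Rmat N)
        = R13l N * R23l N := by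
  haveI : NeZero N := ⟨hpos.ne'⟩
  classical
  have hRR : Rmat N * Rinv' N = 1 := Rmat_mul_Rinv N
  refine ⟨Rinv' N, hRR, (mul_comm (Rinv' N) (Rmat N)).trans hRR, ?_, hex1 N, hex2 N⟩
  intro a
  rw [Delta_cocomm, mul_comm (Rmat N) (DeltaQG N a), mul_assoc, hRR, mul_one]
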